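/- For an unweighted connected graph with m edges and any probability vectors α, β, the inequalities B₂(α,β) ≤ W₁(α,β) ≤ m^{1/2} B₂(α,β) hold, where W₁ is the 1-Wasserstein distance with respect to the shortest-path metric and B₂ is the 2-Beckmann distance. -/

import Mathlib

open Matrix Finset

/-- A walk in a graph given by oriented edge endpoints `ends : Fin m → Fin n × Fin n`:
a list of steps, each an edge together with a direction of traversal. -/
def IsWalk {n m : ℕ} (ends : Fin m → Fin n × Fin n) :
    Fin n → Fin n → List (Fin m × Bool) → Prop
  | i, j, [] => i = j
  | i, j, (e, true) :: rest => (ends e).1 = i ∧ IsWalk ends (ends e).2 j rest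
  | i, j, (e, false) :: rest => (ends e).2 = i ∧ IsWalk ends (ends e).1 j rest

namespace B2W1Aux

variable {n m : ℕ}

/-- source vertex of a step -/
def wsrc (ends : Fin m → Fin n × Fin n) (p : Fin m × Bool) : Fin n :=
  if p.2 then (ends p.1).1 else (ends p.1).2

/-- target vertex of a step -/
def wnext (ends : Fin m → Fin n × Fin n) (p : Fin m × Bool) : Fin n :=
  if p.2 then (ends p.1).2 else (ends p.1).1

lemma isWalk_nil (ends : Fin m → Fin n × Fin n) (i j : Fin n) :
    IsWalk ends i j ([] : List (Fin m × Bool)) ↔ i = j := Iff.rfl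

lemma isWalk_cons (ends : Fin m → Fin n × Fin n) (i j : Fin n) (p : Fin m × Bool)
    (rest : List (Fin m × Bool)) :
    IsWalk ends i j (p :: rest) ↔ wsrc ends p = i ∧ IsWalk ends (wnext ends p) j rest := by
  obtain ⟨e, b⟩ := p
  cases b <;> simp [IsWalk, wsrc, wnext]

lemma isWalk_append (ends : Fin m → Fin n × Fin n) {i j k : Fin n}
    {s t : List (Fin m × Bool)} (h1 : IsWalk ends i j s) (h2 : IsWalk ends j k t) :
    IsWalk ends i k (s ++ t) := by
  induction s generalizing i with
  | nil => cases h1; simpa using h2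
  | cons p rest ih =>
      rw [isWalk_cons] at h1
      rw [List.cons_append, isWalk_cons]
      exact ⟨h1.1, ih h1.2⟩

/-- the signed flow of one unit along a walk -/
def walkFlow (s : List (Fin m × Bool)) : Fin m → ℝ :=
  fun e => (s.map fun p => if p.1 = e then (if p.2 then (1:ℝ) else -1) else 0).sum

lemma walkFlow_nil : walkFlow ([] : List (Fin m × Bool)) = 0 := rfl

lemma walkFlow_cons (p : Fin m × Bool) (rest : List (Fin m × Bool)) (e : Fin m) :
    walkFlow (p :: rest) e
      = (if p.1 = e then (if p.2 then (1:ℝ) else -1) else 0) + walkFlow rest e := by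
  simp [walkFlow]


/-- one step is aligned with the flow J -/
def AStep (J : Fin m → ℝ) (p : Fin m × Bool) : Prop :=
  if p.2 then 0 < J p.1 else J p.1 < 0

def Aligned (J : Fin m → ℝ) (s : List (Fin m × Bool)) : Prop := ∀ p ∈ s, AStep J p

lemma astep_bool_eq {J : Fin m → ℝ} {p q : Fin m × Bool} (hp : AStep J p) (hq : AStep J q)
    (h : p.1 = q.1) : p = q := by
  obtain ⟨e, b⟩ := p; obtain ⟨f, c⟩ := q
  simp only at h; subst h
  cases b <;> cases c <;> simp_all [AStep]
  · exact absurd (hp.trans hq) (lt_irrefl _)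
  · exact absurd (hq.trans hp) (lt_irrefl _)

/-- B applied to the flow of a walk gives the difference of endpoint indicators. -/
lemma mulVec_walkFlow (ends : Fin m → Fin n × Fin n) (B : Matrix (Fin n) (Fin m) ℝ)
    (hB : ∀ i e, B i e =
      (if (ends e).1 = i then (1 : ℝ) else 0) - (if (ends e).2 = i then 1 else 0))
    {i j : Fin n} {s : List (Fin m × Bool)} (hw : IsWalk ends i j s) (k : Fin n) :
    B.mulVec (walkFlow s) k = (if i = k then (1:ℝ) else 0) - (if j = k then 1 else 0) := by
  induction s generalizing i with
  | nil => cases hw; simp [mulVec, walkFlow, dotProduct]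
  | cons p rest ih =>
      rw [isWalk_cons] at hw
      have hrec := ih hw.2
      have hsplit : B.mulVec (walkFlow (p :: rest)) k
          = (∑ e, B k e * (if p.1 = e then (if p.2 then (1:ℝ) else -1) else 0))
            + B.mulVec (walkFlow rest) k := by
        simp only [mulVec, dotProduct, walkFlow_cons, mul_add, Finset.sum_add_distrib]
      rw [hsplit, hrec]
      have hstep : (∑ e, B k e * (if p.1 = e then (if p.2 then (1:ℝ) else -1) else 0))
          = B k p.1 * (if p.2 then (1:ℝ) else -1) := by
        rw [Finset.sum_eq_single p.1]
        · simp
        · intro b _ hb; simp [Ne.symm hb]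
        · simp
      rw [hstep, hB]
      obtain ⟨e, b⟩ := p
      have hs : wsrc ends (e, b) = i := hw.1
      cases b <;> simp only [wsrc, wnext, if_true, if_false, Bool.false_eq_true] at hs ⊢ <;>
        rw [← hs] <;> ring

/-- ℓ¹ norm of a walk flow is at most the length. -/
lemma walkFlow_l1 (s : List (Fin m × Bool)) :
    ∑ e, |walkFlow s e| ≤ (s.length : ℝ) := by
  induction s with
  | nil => simp [walkFlow]
  | cons p rest ih =>
      calc ∑ e, |walkFlow (p :: rest) e|
          ≤ ∑ e, ((if p.1 = e then (1:ℝ) else 0) + |walkFlow rest e|) := by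
            apply Finset.sum_le_sum
            intro e _
            rw [walkFlow_cons]
            refine (abs_add_le _ _).trans ?_
            gcongr
            · split
              · split <;> norm_num
              · simp
        _ = 1 + ∑ e, |walkFlow rest e| := by
            rw [Finset.sum_add_distrib, Finset.sum_ite_eq _ p.1 (fun _ => (1:ℝ))]
            simp
        _ ≤ 1 + (rest.length : ℝ) := by linarith
        _ = ((p :: rest).length : ℝ) := by simp [add_comm]

lemma walkFlow_eq_zero_of_not_mem (s : List (Fin m × Bool)) {e : Fin m}
    (he : e ∉ s.map Prod.fst) : walkFlow s e = 0 := by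
  induction s with
  | nil => rfl
  | cons q rest ih =>
      simp only [List.map_cons, List.mem_cons, not_or] at he
      rw [walkFlow_cons, if_neg (fun h => he.1 h.symm), zero_add]
      exact ih he.2


/-- On a walk with no duplicate edges, the flow value on a used edge is ±1. -/
lemma walkFlow_eq_of_mem (s : List (Fin m × Bool)) (hnd : (s.map Prod.fst).Nodup)
    {p : Fin m × Bool} (hp : p ∈ s) :
    walkFlow s p.1 = if p.2 then (1:ℝ) else -1 := by
  induction s with
  | nil => cases hp
  | cons q rest ih =>
      simp only [List.map_cons, List.nodup_cons] at hnd
      rcases List.mem_cons.mp hp with h | h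
      · subst h
        rw [walkFlow_cons, if_pos rfl]
        have : walkFlow rest p.1 = 0 := by
          apply walkFlow_eq_zero_of_not_mem
          exact hnd.1
        rw [this, add_zero]
      · have hne : q.1 ≠ p.1 := by
          intro he; exact hnd.1 (he ▸ List.mem_map_of_mem (f := Prod.fst) h)
        rw [walkFlow_cons, if_neg hne, zero_add]
        exact ih hnd.2 h


/-- vertex list of a walk starting at i -/
def vlist (ends : Fin m → Fin n × Fin n) : Fin n → List (Fin m × Bool) → List (Fin n)
  | i, [] => [i]
  | i, p :: rest => i :: vlist ends (wnext ends p) rest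

lemma vlist_length (ends : Fin m → Fin n × Fin n) (i : Fin n) (s : List (Fin m × Bool)) :
    (vlist ends i s).length = s.length + 1 := by
  induction s generalizing i with
  | nil => rfl
  | cons p rest ih => simp [vlist, ih]

lemma head_mem_vlist (ends : Fin m → Fin n × Fin n) (i : Fin n) (s : List (Fin m × Bool)) :
    i ∈ vlist ends i s := by
  cases s <;> simp [vlist]

lemma end_mem_vlist (ends : Fin m → Fin n × Fin n) {i j : Fin n} {s : List (Fin m × Bool)}
    (hw : IsWalk ends i j s) : j ∈ vlist ends i s := by
  induction s generalizing i with
  | nil => cases hw; simp [vlist]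
  | cons p rest ih =>
      rw [isWalk_cons] at hw
      exact List.mem_cons_of_mem _ (ih hw.2)

lemma src_mem_vlist (ends : Fin m → Fin n × Fin n) {i j : Fin n} {s : List (Fin m × Bool)}
    (hw : IsWalk ends i j s) {p : Fin m × Bool} (hp : p ∈ s) :
    wsrc ends p ∈ vlist ends i s := by
  induction s generalizing i with
  | nil => cases hp
  | cons q rest ih =>
      rw [isWalk_cons] at hw
      rcases List.mem_cons.mp hp with h | h
      · subst h; rw [hw.1]; exact List.mem_cons_self
      · exact List.mem_cons_of_mem _ (ih hw.2 h)

/-- in a vertex-nodup walk, no step starts at the final vertex -/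
lemma wsrc_ne_last (ends : Fin m → Fin n × Fin n) {i j : Fin n} {s : List (Fin m × Bool)}
    (hw : IsWalk ends i j s) (hnd : (vlist ends i s).Nodup)
    {p : Fin m × Bool} (hp : p ∈ s) : wsrc ends p ≠ j := by
  induction s generalizing i with
  | nil => cases hp
  | cons q rest ih =>
      rw [isWalk_cons] at hw
      have hnd' : i ∉ vlist ends (wnext ends q) rest ∧ (vlist ends (wnext ends q) rest).Nodup := by
        simpa [vlist] using hnd
      rcases List.mem_cons.mp hp with h | h
      · subst h
        rw [hw.1]
        intro hij
        exact hnd'.1 (hij ▸ end_mem_vlist ends hw.2)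
      · exact ih hw.2 hnd'.2 h

/-- vertex-nodup aligned walks have nodup edges -/
lemma edges_nodup (ends : Fin m → Fin n × Fin n) {J : Fin m → ℝ} {i j : Fin n}
    {s : List (Fin m × Bool)} (hw : IsWalk ends i j s) (ha : Aligned J s)
    (hnd : (vlist ends i s).Nodup) : (s.map Prod.fst).Nodup := by
  induction s generalizing i with
  | nil => simp
  | cons q rest ih =>
      rw [isWalk_cons] at hw
      have hnd' : i ∉ vlist ends (wnext ends q) rest ∧ (vlist ends (wnext ends q) rest).Nodup := by
        simpa [vlist] using hnd
      simp only [List.map_cons, List.nodup_cons]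
      constructor
      · intro hmem
        obtain ⟨p, hp, hpe⟩ := List.mem_map.mp hmem
        have : p = q := astep_bool_eq (ha p (List.mem_cons_of_mem _ hp))
          (ha q List.mem_cons_self) hpe
        subst this
        have := src_mem_vlist ends hw.2 hp
        rw [hw.1] at this
        exact hnd'.1 this
      · exact ih hw.2 (fun p hp => ha p (List.mem_cons_of_mem _ hp)) hnd'.2

/-- split a walk at a visited vertex -/
lemma walk_split (ends : Fin m → Fin n × Fin n) {i j w : Fin n} {s : List (Fin m × Bool)}
    (hw : IsWalk ends i j s) (hmem : w ∈ vlist ends i s) :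
    ∃ s₁ s₂, s = s₁ ++ s₂ ∧ IsWalk ends i w s₁ ∧ IsWalk ends w j s₂ := by
  induction s generalizing i with
  | nil =>
      have hij : i = j := hw
      simp only [vlist, List.mem_singleton] at hmem
      exact ⟨[], [], rfl, (isWalk_nil ends i w).mpr hmem.symm,
        (isWalk_nil ends w j).mpr (hmem.trans hij)⟩
  | cons q rest ih =>
      rw [isWalk_cons] at hw
      rcases List.mem_cons.mp hmem with h | h
      · exact ⟨[], q :: rest, rfl, (isWalk_nil ends i w).mpr h.symm,
          by rw [isWalk_cons]; exact ⟨hw.1.trans h.symm, hw.2⟩⟩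
      · obtain ⟨s₁, s₂, hs, h1, h2⟩ := ih hw.2 h
        exact ⟨q :: s₁, s₂, by rw [hs, List.cons_append], by rw [isWalk_cons]; exact ⟨hw.1, h1⟩, h2⟩

/-- existence of an aligned walk of length 1 -/
lemma isWalk_single (ends : Fin m → Fin n × Fin n) (p : Fin m × Bool) :
    IsWalk ends (wsrc ends p) (wnext ends p) [p] := by
  rw [isWalk_cons]
  exact ⟨rfl, rfl⟩

lemma vlist_append_single (ends : Fin m → Fin n × Fin n) (i : Fin n)
    (s : List (Fin m × Bool)) (p : Fin m × Bool) :
    vlist ends i (s ++ [p]) = vlist ends i s ++ [wnext ends p] := by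
  induction s generalizing i with
  | nil => simp [vlist]
  | cons q rest ih =>
      simp only [List.cons_append, vlist, List.cons.injEq, true_and]
      exact ih (wnext ends q)

/-- out-step exists at v -/
def OutV (ends : Fin m → Fin n × Fin n) (J : Fin m → ℝ) (v : Fin n) : Prop :=
  ∃ p : Fin m × Bool, AStep J p ∧ wsrc ends p = v

/-- an aligned closed walk with nodup edges -/
def GoodCycle (ends : Fin m → Fin n × Fin n) (J : Fin m → ℝ) : Prop :=
  ∃ u t, t ≠ ([] : List (Fin m × Bool)) ∧ IsWalk ends u u t ∧ Aligned J t ∧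
    (t.map Prod.fst).Nodup

/-- The main trace lemma. -/
lemma trace (ends : Fin m → Fin n × Fin n) (J : Fin m → ℝ) (i : Fin n) :
    ∀ (k : ℕ) (s : List (Fin m × Bool)) (v : Fin n), n ≤ s.length + k →
    IsWalk ends i v s → Aligned J s → (vlist ends i s).Nodup → OutV ends J v →
    GoodCycle ends J ∨
      ∃ w t, IsWalk ends i w t ∧ Aligned J t ∧ (t.map Prod.fst).Nodup ∧ t ≠ [] ∧
        ¬ OutV ends J w ∧ ∃ p, AStep J p ∧ wnext ends p = w := by
  intro k
  induction k with
  | zero =>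
      intro s v hn hw ha hnd hout
      exfalso
      have h1 : (vlist ends i s).length ≤ n := by
        simpa using hnd.length_le_card
      rw [vlist_length] at h1
      omega
  | succ k ih =>
      intro s v hn hw ha hnd hout
      obtain ⟨p, hp, hsrc⟩ := hout
      by_cases hmem : wnext ends p ∈ vlist ends i s
      · -- found a cycle
        left
        obtain ⟨s₁, s₂, hs, h1, h2⟩ := walk_split ends hw hmem
        refine ⟨wnext ends p, s₂ ++ [p], by simp, ?_, ?_, ?_⟩
        · exact isWalk_append ends h2 (hsrc ▸ isWalk_single ends p)
        · intro q hq
          rcases List.mem_append.mp hq with h | h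
          · exact ha q (hs ▸ List.mem_append.mpr (Or.inr h))
          · rw [List.mem_singleton.mp h]; exact hp
        · rw [List.map_append, List.nodup_append]
          refine ⟨?_, by simp, ?_⟩
          · have : (s.map Prod.fst).Nodup := edges_nodup ends hw ha hnd
            rw [hs, List.map_append] at this
            exact this.of_append_right
          · intro e he
            simp only [List.map_cons, List.map_nil, List.mem_singleton]
            intro _ hb hep; subst hb
            obtain ⟨q, hq, hqe⟩ := List.mem_map.mp he
            have hqs : q ∈ s := hs ▸ List.mem_append.mpr (Or.inr hq)
            have : q = p := astep_bool_eq (ha q hqs) hp (by rw [hqe, hep])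
            subst this
            exact wsrc_ne_last ends hw hnd hqs hsrc
      · -- extend the walk
        have hw' : IsWalk ends i (wnext ends p) (s ++ [p]) :=
          isWalk_append ends hw (hsrc ▸ isWalk_single ends p)
        have ha' : Aligned J (s ++ [p]) := by
          intro q hq
          rcases List.mem_append.mp hq with h | h
          · exact ha q h
          · rw [List.mem_singleton.mp h]; exact hp
        have hnd' : (vlist ends i (s ++ [p])).Nodup := by
          rw [vlist_append_single]
          rw [List.nodup_append]
          exact ⟨hnd, List.nodup_singleton _, fun a ha b hb hab => by
            obtain rfl := List.mem_singleton.mp hb; subst hab; exact hmem ha⟩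
        by_cases hout' : OutV ends J (wnext ends p)
        · exact ih (s ++ [p]) (wnext ends p) (by simpa using by omega) hw' ha' hnd' hout'
        · right
          exact ⟨wnext ends p, s ++ [p], hw', ha', edges_nodup ends hw' ha' hnd',
            by simp, hout', ⟨p, hp, rfl⟩⟩


section Divergence

variable (ends : Fin m → Fin n × Fin n) (hloop : ∀ e, (ends e).1 ≠ (ends e).2)
  (B : Matrix (Fin n) (Fin m) ℝ)
  (hB : ∀ i e, B i e =
    (if (ends e).1 = i then (1 : ℝ) else 0) - (if (ends e).2 = i then 1 else 0))
  (J : Fin m → ℝ)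

include hloop hB

lemma term_nonpos (v : Fin n) (hout : ¬ OutV ends J v) (e : Fin m) : B v e * J e ≤ 0 := by
  by_contra h
  push_neg at h
  rw [hB] at h
  by_cases h1 : (ends e).1 = v <;> by_cases h2 : (ends e).2 = v
  · exact hloop e (h1.trans h2.symm)
  · rw [if_pos h1, if_neg h2, sub_zero, one_mul] at h
    exact hout ⟨(e, true), by simpa [AStep] using h, by simpa [wsrc] using h1⟩
  · rw [if_neg h1, if_pos h2] at h
    have : J e < 0 := by linarith
    exact hout ⟨(e, false), by simpa [AStep] using this, by simpa [wsrc] using h2⟩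
  · rw [if_neg h1, if_neg h2] at h
    linarith

lemma div_pos_out (v : Fin n) (hpos : 0 < ∑ e, B v e * J e) : OutV ends J v := by
  by_contra hout
  have : ∑ e, B v e * J e ≤ 0 :=
    Finset.sum_nonpos (fun e _ => term_nonpos ends hloop B hB J v hout e)
  linarith

lemma div_neg_of_stuck (v : Fin n) (hout : ¬ OutV ends J v)
    (hin : ∃ p, AStep J p ∧ wnext ends p = v) : ∑ e, B v e * J e < 0 := by
  obtain ⟨p, hp, hv⟩ := hin
  have hterm : B v p.1 * J p.1 < 0 := by
    obtain ⟨e, b⟩ := p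
    cases b
    · have hp' : J e < 0 := by simpa [AStep] using hp
      have h1 : (ends e).1 = v := by simpa [wnext] using hv
      have h2 : (ends e).2 ≠ v := by
        intro h2
        exact hout ⟨(e, false), by simpa [AStep] using hp', by simpa [wsrc] using h2⟩
      rw [hB, if_pos h1, if_neg h2]
      simp only []
      linarith
    · have hp' : 0 < J e := by simpa [AStep] using hp
      have h2 : (ends e).2 = v := by simpa [wnext] using hv
      have h1 : (ends e).1 ≠ v := by
        intro h1
        exact hout ⟨(e, true), by simpa [AStep] using hp', by simpa [wsrc] using h1⟩
      rw [hB, if_neg h1, if_pos h2]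
      simp only []
      linarith
  have hsum : ∑ e ∈ Finset.univ.erase p.1, B v e * J e ≤ 0 :=
    Finset.sum_nonpos (fun e _ => term_nonpos ends hloop B hB J v hout e)
  calc ∑ e, B v e * J e
      = (∑ e ∈ Finset.univ.erase p.1, B v e * J e) + B v p.1 * J p.1 :=
        (Finset.sum_erase_add _ _ (Finset.mem_univ _)).symm
    _ < 0 := by linarith

omit hloop in
lemma sum_div_zero : ∑ v, ∑ e, B v e * J e = 0 := by
  rw [Finset.sum_comm]
  apply Finset.sum_eq_zero
  intro e _
  have : ∑ v, B v e = 0 := by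
    simp only [hB]
    rw [Finset.sum_sub_distrib]
    rw [Finset.sum_ite_eq Finset.univ (ends e).1 (fun _ => (1:ℝ)),
      Finset.sum_ite_eq Finset.univ (ends e).2 (fun _ => (1:ℝ))]
    simp
  calc ∑ v, B v e * J e = (∑ v, B v e) * J e := by rw [Finset.sum_mul]
    _ = 0 := by rw [this, zero_mul]

end Divergence

section Strip

variable {J : Fin m → ℝ} {t : List (Fin m × Bool)} {ε : ℝ}

/-- absolute value of stripped flow on an edge of the walk -/
lemma strip_abs_mem (ha : Aligned J t) (hnd : (t.map Prod.fst).Nodup)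
    (hle : ∀ p ∈ t, ε ≤ |J p.1|) {p : Fin m × Bool} (hp : p ∈ t) :
    |J p.1 - ε * walkFlow t p.1| = |J p.1| - ε := by
  rw [walkFlow_eq_of_mem t hnd hp]
  have h := ha p hp
  have h2 := hle p hp
  by_cases hb : p.2 = true
  · simp only [AStep, hb, if_true] at h
    rw [if_pos hb]
    rw [abs_of_pos h] at h2 ⊢
    rw [abs_of_nonneg (by linarith), mul_one]
  · simp only [AStep, hb, if_false] at h
    rw [if_neg hb]
    rw [abs_of_neg h] at h2 ⊢
    rw [abs_of_nonpos (by linarith)]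
    ring

lemma strip_not_mem (J : Fin m → ℝ) (t : List (Fin m × Bool)) (ε : ℝ) {e : Fin m}
    (he : e ∉ t.map Prod.fst) :
    J e - ε * walkFlow t e = J e := by
  rw [walkFlow_eq_zero_of_not_mem t he, mul_zero, sub_zero]

lemma strip_abs_le (ha : Aligned J t) (hnd : (t.map Prod.fst).Nodup)
    (hε : 0 ≤ ε) (hle : ∀ p ∈ t, ε ≤ |J p.1|) (e : Fin m) :
    |J e - ε * walkFlow t e| ≤ |J e| := by
  by_cases he : e ∈ t.map Prod.fst
  · obtain ⟨p, hp, hpe⟩ := List.mem_map.mp he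
    subst hpe
    rw [strip_abs_mem ha hnd hle hp]
    linarith
  · rw [strip_not_mem J t ε he]

lemma strip_l1 (ha : Aligned J t) (hnd : (t.map Prod.fst).Nodup)
    (hle : ∀ p ∈ t, ε ≤ |J p.1|) :
    ∑ e, |J e - ε * walkFlow t e| = ∑ e, |J e| - ε * t.length := by
  have key : ∑ e, (|J e| - |J e - ε * walkFlow t e|) = ε * t.length := by
    rw [← Finset.sum_subset (Finset.subset_univ (t.map Prod.fst).toFinset)]
    · have h1 : ∀ e ∈ (t.map Prod.fst).toFinset,
          |J e| - |J e - ε * walkFlow t e| = ε := by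
        intro e he
        obtain ⟨p, hp, hpe⟩ := List.mem_map.mp (List.mem_toFinset.mp he)
        subst hpe
        rw [strip_abs_mem ha hnd hle hp]
        ring
      rw [Finset.sum_congr rfl h1, Finset.sum_const, nsmul_eq_mul]
      rw [List.toFinset_card_of_nodup hnd, List.length_map]
      ring
    · intro e _ he
      rw [strip_not_mem J t ε (fun h => he (List.mem_toFinset.mpr h))]
      ring
  rw [Finset.sum_sub_distrib] at key
  linarith

lemma strip_supp_subset (hε : 0 < ε) (hle : ∀ p ∈ t, ε ≤ |J p.1|) :
    Finset.univ.filter (fun e => J e - ε * walkFlow t e ≠ 0)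
      ⊆ Finset.univ.filter (fun e => J e ≠ 0) := by
  intro e he
  simp only [Finset.mem_filter, Finset.mem_univ, true_and] at he ⊢
  by_cases hm : e ∈ t.map Prod.fst
  · obtain ⟨p, hp, hpe⟩ := List.mem_map.mp hm
    subst hpe
    have := hle p hp
    intro h0
    rw [h0, abs_zero] at this
    linarith
  · rw [strip_not_mem J t ε hm] at he
    exact he

lemma strip_supp_ssubset (ha : Aligned J t) (hnd : (t.map Prod.fst).Nodup)
    (hε : 0 < ε) (hle : ∀ p ∈ t, ε ≤ |J p.1|)
    {p : Fin m × Bool} (hp : p ∈ t) (hmin : |J p.1| = ε) :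
    Finset.univ.filter (fun e => J e - ε * walkFlow t e ≠ 0)
      ⊂ Finset.univ.filter (fun e => J e ≠ 0) := by
  refine (Finset.ssubset_iff_of_subset (strip_supp_subset hε hle)).mpr ?_
  refine ⟨p.1, ?_, ?_⟩
  · simp only [Finset.mem_filter, Finset.mem_univ, true_and]
    intro h0
    rw [h0, abs_zero] at hmin
    linarith
  · simp only [Finset.mem_filter, Finset.mem_univ, true_and, not_not]
    have h3 := strip_abs_mem ha hnd hle hp
    rw [hmin] at h3
    have h2 : |J p.1 - ε * walkFlow t p.1| = 0 := by rw [h3]; ring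
    exact abs_eq_zero.mp h2

lemma strip_mulVec (ends : Fin m → Fin n × Fin n) (B : Matrix (Fin n) (Fin m) ℝ)
    (hB : ∀ i e, B i e =
      (if (ends e).1 = i then (1 : ℝ) else 0) - (if (ends e).2 = i then 1 else 0))
    {i j : Fin n} (hw : IsWalk ends i j t) (k : Fin n) :
    B.mulVec (fun e => J e - ε * walkFlow t e) k
      = B.mulVec J k - ε * ((if i = k then (1:ℝ) else 0) - (if j = k then 1 else 0)) := by
  have h1 : B.mulVec (fun e => J e - ε * walkFlow t e) k
      = B.mulVec J k - ε * B.mulVec (walkFlow t) k := by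
    simp only [Matrix.mulVec, dotProduct]
    rw [Finset.mul_sum, ← Finset.sum_sub_distrib]
    congr 1; ext e; ring
  rw [h1, mulVec_walkFlow ends B hB hw k]

end Strip

/-- minimum of |J| over a nonempty aligned walk -/
lemma edge_min (J : Fin m → ℝ) (t : List (Fin m × Bool)) (hne : t ≠ [])
    (ha : Aligned J t) :
    ∃ ε : ℝ, 0 < ε ∧ (∀ p ∈ t, ε ≤ |J p.1|) ∧ ∃ p ∈ t, |J p.1| = ε := by
  have hFne : (t.map fun p => |J p.1|).toFinset.Nonempty := by
    obtain ⟨p, hp⟩ := List.exists_mem_of_ne_nil t hne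
    exact ⟨|J p.1|, List.mem_toFinset.mpr (List.mem_map_of_mem hp)⟩
  set F := (t.map fun p => |J p.1|).toFinset with hF
  refine ⟨F.min' hFne, ?_, ?_, ?_⟩
  · obtain ⟨x, hx, hxe⟩ := List.mem_map.mp (List.mem_toFinset.mp (F.min'_mem hFne))
    rw [← hxe]
    have := ha x hx
    have hne0 : J x.1 ≠ 0 := by
      by_cases hb : x.2 = true <;> simp [AStep, hb] at this <;>
        [exact ne_of_gt this; exact ne_of_lt this]
    exact abs_pos.mpr hne0
  · intro p hp
    exact F.min'_le _ (List.mem_toFinset.mpr (List.mem_map_of_mem hp))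
  · obtain ⟨x, hx, hxe⟩ := List.mem_map.mp (List.mem_toFinset.mp (F.min'_mem hFne))
    exact ⟨x, hx, hxe⟩

section Decomp

variable (ends : Fin m → Fin n × Fin n) (hloop : ∀ e, (ends e).1 ≠ (ends e).2)
  (B : Matrix (Fin n) (Fin m) ℝ)
  (hB : ∀ i e, B i e =
    (if (ends e).1 = i then (1 : ℝ) else 0) - (if (ends e).2 = i then 1 else 0))
  (d : Fin n → Fin n → ℝ) (hd0 : ∀ i, d i i = 0)
  (hdle : ∀ (i j : Fin n) (s : List (Fin m × Bool)), IsWalk ends i j s →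
    d i j ≤ (s.length : ℝ))

set_option linter.unusedSectionVars false in
include hB in
lemma decomp_base (J : Fin m → ℝ) (α β : Fin n → ℝ) (hα : ∀ i, 0 ≤ α i)
    (hz : ∀ e, J e = 0) (hJ : ∀ k, B.mulVec J k = α k - β k) (hd0' : ∀ i, d i i = 0) :
    ∃ π : Matrix (Fin n) (Fin n) ℝ, (∀ i j, 0 ≤ π i j) ∧ (∀ i, ∑ j, π i j = α i) ∧
      (∀ j, ∑ i, π i j = β j) ∧ ∑ i, ∑ j, π i j * d i j ≤ ∑ e, |J e| := by
  have hab : ∀ k, α k = β k := by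
    intro k
    have h0 : B.mulVec J k = 0 := by
      simp only [Matrix.mulVec, dotProduct]
      exact Finset.sum_eq_zero (fun e _ => by rw [hz e, mul_zero])
    have := hJ k
    rw [h0] at this
    linarith [this.symm]
  refine ⟨fun k l => if k = l then α k else 0, ?_, ?_, ?_, ?_⟩
  · intro i j
    dsimp only
    split
    · exact hα i
    · exact le_rfl
  · intro i
    dsimp only
    simp [Finset.sum_ite_eq]
  · intro j
    dsimp only
    rw [Finset.sum_ite_eq' Finset.univ j (fun k => α k)]
    simp [hab j]
  · dsimp only
    have h1 : ∀ k : Fin n, ∑ l, (if k = l then α k else 0) * d k l = 0 := by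
      intro k
      rw [Finset.sum_eq_single k]
      · simp [hd0' k]
      · intro l _ hl; rw [if_neg (Ne.symm hl), zero_mul]
      · simp
    rw [Finset.sum_congr rfl (fun k _ => h1 k)]
    simp [fun e => hz e]

include hloop hB hd0 hdle in
lemma decomp : ∀ (N : ℕ) (J : Fin m → ℝ) (α β : Fin n → ℝ),
    (∀ i, 0 ≤ α i) → (∀ i, 0 ≤ β i) → (∀ k, B.mulVec J k = α k - β k) →
    (Finset.univ.filter (fun e => J e ≠ 0)).card
      + (Finset.univ.filter (fun k => α k ≠ β k)).card ≤ N →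
    ∃ π : Matrix (Fin n) (Fin n) ℝ, (∀ i j, 0 ≤ π i j) ∧ (∀ i, ∑ j, π i j = α i) ∧
      (∀ j, ∑ i, π i j = β j) ∧ ∑ i, ∑ j, π i j * d i j ≤ ∑ e, |J e| := by
  intro N
  induction N with
  | zero =>
      intro J α β hα hβ hJ hcard
      have hz : ∀ e, J e = 0 := by
        intro e
        by_contra he
        have : e ∈ Finset.univ.filter (fun e => J e ≠ 0) := by simp [he]
        have := Finset.card_pos.mpr ⟨e, this⟩
        omega
      exact decomp_base ends B hB d J α β hα hz hJ hd0
  | succ N ih =>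
      intro J α β hα hβ hJ hcard
      by_cases hz : ∀ e, J e = 0
      · exact decomp_base ends B hB d J α β hα hz hJ hd0
      push_neg at hz
      obtain ⟨e₀, he₀⟩ := hz
      have hdiv : ∀ k, (∑ e, B k e * J e) = α k - β k := by
        intro k; rw [← hJ k]; simp [Matrix.mulVec, dotProduct]
      -- shared cycle case
      have cycle_case : GoodCycle ends J →
          ∃ π : Matrix (Fin n) (Fin n) ℝ, (∀ i j, 0 ≤ π i j) ∧ (∀ i, ∑ j, π i j = α i) ∧
            (∀ j, ∑ i, π i j = β j) ∧ ∑ i, ∑ j, π i j * d i j ≤ ∑ e, |J e| := by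
        rintro ⟨u, t, htne, hwt, hat, hndt⟩
        obtain ⟨ε, hε, hle', hattain⟩ := edge_min J t htne hat
        have hl1 := strip_l1 hat hndt hle'
        have hmv : ∀ k, B.mulVec (fun e => J e - ε * walkFlow t e) k = α k - β k := by
          intro k
          rw [strip_mulVec ends B hB hwt k, hJ k]
          ring
        obtain ⟨p, hp, hmin⟩ := hattain
        have hcard' : (Finset.univ.filter (fun e => (J e - ε * walkFlow t e) ≠ 0)).card
            + (Finset.univ.filter (fun k => α k ≠ β k)).card ≤ N := by
          have := Finset.card_lt_card (strip_supp_ssubset hat hndt hε hle' hp hmin)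
          omega
        obtain ⟨π, h1, h2, h3, h4⟩ := ih (fun e => J e - ε * walkFlow t e) α β hα hβ hmv hcard'
        refine ⟨π, h1, h2, h3, ?_⟩
        have hnn : (0:ℝ) ≤ ε * t.length := by positivity
        calc ∑ i, ∑ j, π i j * d i j ≤ ∑ e, |J e - ε * walkFlow t e| := h4
          _ = ∑ e, |J e| - ε * t.length := hl1
          _ ≤ ∑ e, |J e| := by linarith
      by_cases hA : ∃ i₀, 0 < α i₀ - β i₀
      · obtain ⟨i₀, hi₀⟩ := hA
        have hout : OutV ends J i₀ :=
          div_pos_out ends hloop B hB J i₀ (by rw [hdiv]; exact hi₀)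
        have htr := trace ends J i₀ n [] i₀ (by simp) ((isWalk_nil ends i₀ i₀).mpr rfl)
          (fun p hp => absurd hp List.not_mem_nil) (by simp [vlist]) hout
        rcases htr with hcyc | ⟨w, t, hwt, hat, hndt, htne, houtw, hinw⟩
        · exact cycle_case hcyc
        · -- path case
          have hdivw : α w - β w < 0 := by
            rw [← hdiv]; exact div_neg_of_stuck ends hloop B hB J w houtw hinw
          have hiw : i₀ ≠ w := by intro h; rw [h] at hi₀; linarith
          obtain ⟨εe, hεe, hlee, hattain⟩ := edge_min J t htne hat
          set a := α i₀ - β i₀ with ha_def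
          set bw := β w - α w with hbw_def
          have hbw : 0 < bw := by simp only [hbw_def]; linarith
          set ε := min (min εe a) bw with hε_def
          have hε : 0 < ε := by
            simp only [hε_def]
            exact lt_min (lt_min hεe hi₀) hbw
          have hεa : ε ≤ a := le_trans (min_le_left _ _) (min_le_right _ _)
          have hεb : ε ≤ bw := min_le_right _ _
          have hle' : ∀ p ∈ t, ε ≤ |J p.1| := fun p hp =>
            le_trans (le_trans (min_le_left _ _) (min_le_left _ _)) (hlee p hp)
          set α' := fun k => α k - if i₀ = k then ε else 0 with hα'_def
          set β' := fun k => β k - if w = k then ε else 0 with hβ'_def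
          have hα'nn : ∀ k, 0 ≤ α' k := by
            intro k
            simp only [hα'_def]
            split
            · rename_i h; rw [← h]; have := hβ i₀; simp only [ha_def] at hεa; linarith
            · linarith [hα k]
          have hβ'nn : ∀ k, 0 ≤ β' k := by
            intro k
            simp only [hβ'_def]
            split
            · rename_i h; rw [← h]; have := hα w; simp only [hbw_def] at hεb; linarith
            · linarith [hβ k]
          have hmv : ∀ k, B.mulVec (fun e => J e - ε * walkFlow t e) k = α' k - β' k := by
            intro k
            rw [strip_mulVec ends B hB hwt k, hJ k]
            simp only [hα'_def, hβ'_def]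
            by_cases h1 : i₀ = k <;> by_cases h2 : w = k <;> simp [h1, h2] <;> ring
          -- diff sets
          have hdiffsub : Finset.univ.filter (fun k => α' k ≠ β' k)
              ⊆ Finset.univ.filter (fun k => α k ≠ β k) := by
            intro k hk
            simp only [Finset.mem_filter, Finset.mem_univ, true_and] at hk ⊢
            by_cases h1 : i₀ = k
            · rw [← h1]; simp only [ha_def] at hi₀; intro h; rw [h] at hi₀; linarith
            · by_cases h2 : w = k
              · rw [← h2]; intro h; rw [h] at hdivw; linarith
              · simp only [hα'_def, hβ'_def, if_neg h1, if_neg h2, sub_zero] at hk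
                exact hk
          have hsuppsub := strip_supp_subset (J := J) (t := t) hε hle'
          -- strict decrease of the measure
          have hmincases : (∃ p ∈ t, |J p.1| = ε) ∨ ε = a ∨ ε = bw := by
            rcases min_cases (min εe a) bw with ⟨h, _⟩ | ⟨h, _⟩
            · rcases min_cases εe a with ⟨h2, _⟩ | ⟨h2, _⟩
              · left
                obtain ⟨p, hp, hpe⟩ := hattain
                exact ⟨p, hp, by rw [hpe, hε_def, h, h2]⟩
              · right; left; rw [hε_def, h, h2]
            · right; right; rw [hε_def, h]
          have hcard' : (Finset.univ.filter (fun e => (J e - ε * walkFlow t e) ≠ 0)).card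
              + (Finset.univ.filter (fun k => α' k ≠ β' k)).card ≤ N := by
            have hd2 := Finset.card_le_card hdiffsub
            have hs2 := Finset.card_le_card hsuppsub
            rcases hmincases with ⟨p, hp, hmin⟩ | h | h
            · have := Finset.card_lt_card (strip_supp_ssubset hat hndt hε hle' hp hmin)
              omega
            · -- i₀ leaves the diff set
              have hi₀mem : i₀ ∈ Finset.univ.filter (fun k => α k ≠ β k) := by
                simp only [Finset.mem_filter, Finset.mem_univ, true_and]
                simp only [ha_def] at hi₀
                intro hh; rw [hh] at hi₀; linarith
              have hi₀not : i₀ ∉ Finset.univ.filter (fun k => α' k ≠ β' k) := by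
                simp only [Finset.mem_filter, Finset.mem_univ, true_and, not_not]
                have hwne : ¬ (w = i₀) := fun hh => hiw hh.symm
                simp only [hα'_def, hβ'_def, if_neg hwne, eq_self_iff_true, if_true, sub_zero]
                simp only [ha_def] at h
                linarith
              have := Finset.card_lt_card
                ((Finset.ssubset_iff_of_subset hdiffsub).mpr ⟨i₀, hi₀mem, hi₀not⟩)
              omega
            · -- w leaves the diff set
              have hwmem : w ∈ Finset.univ.filter (fun k => α k ≠ β k) := by
                simp only [Finset.mem_filter, Finset.mem_univ, true_and]
                intro hh; rw [hh] at hdivw; linarith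
              have hwnot : w ∉ Finset.univ.filter (fun k => α' k ≠ β' k) := by
                simp only [Finset.mem_filter, Finset.mem_univ, true_and, not_not]
                simp only [hα'_def, hβ'_def, if_neg hiw, eq_self_iff_true, if_true, sub_zero]
                simp only [hbw_def] at h
                linarith
              have := Finset.card_lt_card
                ((Finset.ssubset_iff_of_subset hdiffsub).mpr ⟨w, hwmem, hwnot⟩)
              omega
          obtain ⟨π, h1, h2, h3, h4⟩ :=
            ih (fun e => J e - ε * walkFlow t e) α' β' hα'nn hβ'nn hmv hcard'
          have hl1 := strip_l1 hat hndt hle'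
          -- add ε mass from i₀ to w
          refine ⟨fun k l => π k l + if i₀ = k ∧ w = l then ε else 0, ?_, ?_, ?_, ?_⟩
          · intro k l
            have := h1 k l
            dsimp only
            split <;> linarith
          · intro k
            have hsum : ∑ l, (if i₀ = k ∧ w = l then ε else 0) = if i₀ = k then ε else 0 := by
              by_cases hk : i₀ = k
              · simp only [hk, true_and]
                rw [Finset.sum_ite_eq Finset.univ w (fun _ => ε)]
                simp
              · simp [hk]
            rw [Finset.sum_add_distrib, h2 k, hsum]
            simp only [hα'_def]
            ring
          · intro l
            have hsum : ∑ k, (if i₀ = k ∧ w = l then ε else 0) = if w = l then ε else 0 := by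
              by_cases hl : w = l
              · simp only [hl, and_true]
                rw [Finset.sum_ite_eq Finset.univ i₀ (fun _ => ε)]
                simp
              · simp [hl]
            rw [Finset.sum_add_distrib, h3 l, hsum]
            simp only [hβ'_def]
            ring
          · have hcost : ∑ k, ∑ l, (if i₀ = k ∧ w = l then ε else 0) * d k l
                = ε * d i₀ w := by
              have hinner : ∀ k, ∑ l, (if i₀ = k ∧ w = l then ε else 0) * d k l
                  = if i₀ = k then ε * d k w else 0 := by
                intro k
                by_cases hk : i₀ = k
                · simp only [hk, true_and, if_true]
                  rw [Finset.sum_congr rfl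
                    (fun l _ => ite_mul (w = l) ε 0 (d k l))]
                  simp only [zero_mul]
                  rw [Finset.sum_ite_eq Finset.univ w (fun l => ε * d k l)]
                  simp
                · simp [hk]
              rw [Finset.sum_congr rfl (fun k _ => hinner k)]
              rw [Finset.sum_ite_eq Finset.univ i₀ (fun k => ε * d k w)]
              simp
            have hsplit : ∑ k, ∑ l, (π k l + if i₀ = k ∧ w = l then ε else 0) * d k l
                = (∑ k, ∑ l, π k l * d k l)
                  + ∑ k, ∑ l, (if i₀ = k ∧ w = l then ε else 0) * d k l := by
              rw [← Finset.sum_add_distrib]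
              congr 1; ext k
              rw [← Finset.sum_add_distrib]
              congr 1; ext l
              ring
            have hdw : d i₀ w ≤ (t.length : ℝ) := hdle i₀ w t hwt
            rw [hsplit, hcost]
            have : ε * d i₀ w ≤ ε * t.length := by
              apply mul_le_mul_of_nonneg_left hdw (le_of_lt hε)
            calc (∑ k, ∑ l, π k l * d k l) + ε * d i₀ w
                ≤ (∑ e, |J e - ε * walkFlow t e|) + ε * d i₀ w := by linarith
              _ = (∑ e, |J e| - ε * t.length) + ε * d i₀ w := by rw [hl1]
              _ ≤ ∑ e, |J e| := by linarith
      · -- no positive divergence: α = β pointwise, find a cycle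
        push_neg at hA
        have hz2 : ∀ k, α k - β k = 0 := by
          have hsum : ∑ k, (α k - β k) = 0 := by
            rw [Finset.sum_congr rfl (fun k _ => (hdiv k).symm)]
            exact sum_div_zero ends B hB J
          intro k
          have := (Finset.sum_eq_zero_iff_of_nonpos
            (fun k _ => hA k)).mp hsum k (Finset.mem_univ k)
          exact this
        -- starting step
        have hstep : ∃ p : Fin m × Bool, AStep J p := by
          rcases lt_or_gt_of_ne he₀ with h | h
          · exact ⟨(e₀, false), by simpa [AStep] using h⟩
          · exact ⟨(e₀, true), by simpa [AStep] using h⟩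
        obtain ⟨p₀, hp₀⟩ := hstep
        set v₀ := wsrc ends p₀ with hv₀
        have hout : OutV ends J v₀ := ⟨p₀, hp₀, rfl⟩
        have htr := trace ends J v₀ n [] v₀ (by simp) ((isWalk_nil ends v₀ v₀).mpr rfl)
          (fun p hp => absurd hp List.not_mem_nil) (by simp [vlist]) hout
        rcases htr with hcyc | ⟨w, t, hwt, hat, hndt, htne, houtw, hinw⟩
        · exact cycle_case hcyc
        · exfalso
          have := div_neg_of_stuck ends hloop B hB J w houtw hinw
          rw [hdiv w, hz2 w] at this
          exact absurd this (lt_irrefl 0)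

end Decomp

lemma sum_comm3 {f : Fin m → Fin n → Fin n → ℝ} :
    ∑ e, ∑ i, ∑ j, f e i j = ∑ i, ∑ j, ∑ e, f e i j := by
  rw [Finset.sum_comm]
  exact Finset.sum_congr rfl fun i _ => Finset.sum_comm

lemma coupling_to_flow (ends : Fin m → Fin n × Fin n) (B : Matrix (Fin n) (Fin m) ℝ)
    (hB : ∀ i e, B i e =
      (if (ends e).1 = i then (1 : ℝ) else 0) - (if (ends e).2 = i then 1 else 0))
    (d : Fin n → Fin n → ℝ) (s : Fin n → Fin n → List (Fin m × Bool))
    (hws : ∀ i j, IsWalk ends i j (s i j)) (hlen : ∀ i j, ((s i j).length : ℝ) = d i j)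
    (α β : Fin n → ℝ) (π : Matrix (Fin n) (Fin n) ℝ) (hπ : ∀ i j, 0 ≤ π i j)
    (hrow : ∀ i, ∑ j, π i j = α i) (hcol : ∀ j, ∑ i, π i j = β j) :
    ∃ J : Fin m → ℝ, B.mulVec J = α - β ∧
      Real.sqrt (∑ e, J e ^ 2) ≤ ∑ i, ∑ j, π i j * d i j := by
  set J : Fin m → ℝ := fun e => ∑ i, ∑ j, π i j * walkFlow (s i j) e with hJdef
  have hmv : B.mulVec J = α - β := by
    funext k
    have h1 : B.mulVec J k = ∑ e, B k e * J e := by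
      simp [Matrix.mulVec, dotProduct]
    have h2 : ∑ e, B k e * J e
        = ∑ i, ∑ j, π i j * ∑ e, B k e * walkFlow (s i j) e := by
      calc ∑ e, B k e * J e
          = ∑ e, ∑ i, ∑ j, B k e * (π i j * walkFlow (s i j) e) := by
            refine Finset.sum_congr rfl fun e _ => ?_
            rw [hJdef]
            simp only [Finset.mul_sum]
        _ = ∑ i, ∑ j, ∑ e, B k e * (π i j * walkFlow (s i j) e) := sum_comm3
        _ = ∑ i, ∑ j, π i j * ∑ e, B k e * walkFlow (s i j) e := by
            refine Finset.sum_congr rfl fun i _ => Finset.sum_congr rfl fun j _ => ?_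
            rw [Finset.mul_sum]
            exact Finset.sum_congr rfl fun e _ => by ring
    have h3 : ∀ i j : Fin n, ∑ e, B k e * walkFlow (s i j) e
        = (if i = k then (1:ℝ) else 0) - (if j = k then 1 else 0) := by
      intro i j
      have := mulVec_walkFlow ends B hB (hws i j) k
      simpa [Matrix.mulVec, dotProduct] using this
    have h4 : ∑ i, ∑ j, π i j * ((if i = k then (1:ℝ) else 0) - (if j = k then 1 else 0))
        = α k - β k := by
      have hsplit : ∑ i, ∑ j, π i j * ((if i = k then (1:ℝ) else 0) - (if j = k then 1 else 0))
          = (∑ i, ∑ j, π i j * (if i = k then (1:ℝ) else 0))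
            - ∑ i, ∑ j, π i j * (if j = k then (1:ℝ) else 0) := by
        rw [← Finset.sum_sub_distrib]
        refine Finset.sum_congr rfl fun i _ => ?_
        rw [← Finset.sum_sub_distrib]
        exact Finset.sum_congr rfl fun j _ => by ring
      have hP1 : ∑ i, ∑ j, π i j * (if i = k then (1:ℝ) else 0) = α k := by
        have hi : ∀ i : Fin n, ∑ j, π i j * (if i = k then (1:ℝ) else 0)
            = if i = k then α i else 0 := by
          intro i
          by_cases hik : i = k
          · subst hik; simp [hrow i]
          · simp [hik]
        rw [Finset.sum_congr rfl fun i _ => hi i,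
          Finset.sum_ite_eq' Finset.univ k (fun i => α i)]
        simp
      have hP2 : ∑ i, ∑ j, π i j * (if j = k then (1:ℝ) else 0) = β k := by
        have hi : ∀ i : Fin n, ∑ j, π i j * (if j = k then (1:ℝ) else 0) = π i k := by
          intro i
          have : ∀ j : Fin n, π i j * (if j = k then (1:ℝ) else 0)
              = if j = k then π i j else 0 := by
            intro j; split <;> ring
          rw [Finset.sum_congr rfl fun j _ => this j,
            Finset.sum_ite_eq' Finset.univ k (fun j => π i j)]
          simp
        rw [Finset.sum_congr rfl fun i _ => hi i, hcol k]
      rw [hsplit, hP1, hP2]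
    rw [Pi.sub_apply, h1, h2]
    rw [Finset.sum_congr rfl fun i _ => Finset.sum_congr rfl fun j _ => by rw [h3 i j]]
    exact h4
  refine ⟨J, hmv, ?_⟩
  have hl1 : ∑ e, |J e| ≤ ∑ i, ∑ j, π i j * d i j := by
    calc ∑ e, |J e|
        ≤ ∑ e, ∑ i, ∑ j, π i j * |walkFlow (s i j) e| := by
          refine Finset.sum_le_sum fun e _ => ?_
          rw [hJdef]
          refine (Finset.abs_sum_le_sum_abs _ _).trans ?_
          refine Finset.sum_le_sum fun i _ => ?_
          refine (Finset.abs_sum_le_sum_abs _ _).trans ?_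
          refine Finset.sum_le_sum fun j _ => ?_
          rw [abs_mul, abs_of_nonneg (hπ i j)]
      _ = ∑ i, ∑ j, π i j * ∑ e, |walkFlow (s i j) e| := by
          rw [sum_comm3]
          refine Finset.sum_congr rfl fun i _ => Finset.sum_congr rfl fun j _ => ?_
          rw [Finset.mul_sum]
      _ ≤ ∑ i, ∑ j, π i j * d i j := by
          refine Finset.sum_le_sum fun i _ => Finset.sum_le_sum fun j _ => ?_
          refine mul_le_mul_of_nonneg_left ?_ (hπ i j)
          rw [← hlen i j]
          exact walkFlow_l1 (s i j)
  have habs : Real.sqrt (∑ e, J e ^ 2) ≤ ∑ e, |J e| := by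
    have h1 : ∑ e, J e ^ 2 ≤ (∑ e, |J e|) ^ 2 := by
      have h2 : ∀ e : Fin m, J e ^ 2 ≤ |J e| * ∑ e', |J e'| := by
        intro e
        rw [← sq_abs]
        have : |J e| ≤ ∑ e', |J e'| :=
          Finset.single_le_sum (fun e' _ => abs_nonneg (J e')) (Finset.mem_univ e)
        calc |J e| ^ 2 = |J e| * |J e| := by ring
          _ ≤ |J e| * ∑ e', |J e'| := mul_le_mul_of_nonneg_left this (abs_nonneg _)
      calc ∑ e, J e ^ 2 ≤ ∑ e, |J e| * ∑ e', |J e'| := Finset.sum_le_sum fun e _ => h2 e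
        _ = (∑ e, |J e|) ^ 2 := by rw [← Finset.sum_mul, sq]
    calc Real.sqrt (∑ e, J e ^ 2) ≤ Real.sqrt ((∑ e, |J e|) ^ 2) := Real.sqrt_le_sqrt h1
      _ = ∑ e, |J e| := Real.sqrt_sq (Finset.sum_nonneg fun e _ => abs_nonneg _)
  linarith

lemma l1_le_sqrt_card (J : Fin m → ℝ) :
    ∑ e, |J e| ≤ Real.sqrt m * Real.sqrt (∑ e, J e ^ 2) := by
  have h1 : (∑ e, |J e|) ^ 2 ≤ (m : ℝ) * ∑ e, J e ^ 2 := by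
    have := sq_sum_le_card_mul_sum_sq (s := (Finset.univ : Finset (Fin m)))
      (f := fun e => |J e|)
    simpa [sq_abs] using this
  have h2 : ∑ e, |J e| = Real.sqrt ((∑ e, |J e|) ^ 2) :=
    (Real.sqrt_sq (Finset.sum_nonneg fun e _ => abs_nonneg _)).symm
  rw [h2]
  calc Real.sqrt ((∑ e, |J e|) ^ 2) ≤ Real.sqrt ((m : ℝ) * ∑ e, J e ^ 2) :=
        Real.sqrt_le_sqrt h1
    _ = Real.sqrt m * Real.sqrt (∑ e, J e ^ 2) := Real.sqrt_mul (by positivity) _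

end B2W1Aux

open B2W1Aux in
/-- For an unweighted connected graph with `m` edges and
probability vectors `α, β`, one has `B₂(α,β) ≤ W₁(α,β) ≤ √m · B₂(α,β)`,
where `W₁` uses the (unit-weight) shortest-path metric. -/
theorem b2_w1_sandwich_unweighted
    (n m : ℕ) (ends : Fin m → Fin n × Fin n)
    (hloop : ∀ e, (ends e).1 ≠ (ends e).2)
    (B : Matrix (Fin n) (Fin m) ℝ)
    (hB : ∀ i e, B i e =
      (if (ends e).1 = i then (1 : ℝ) else 0) - (if (ends e).2 = i then 1 else 0))
    (hconn : ∀ i j : Fin n, ∃ s : List (Fin m × Bool), IsWalk ends i j s)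
    (α β : Fin n → ℝ)
    (hα : (∀ i, 0 ≤ α i) ∧ ∑ i, α i = 1)
    (hβ : (∀ i, 0 ≤ β i) ∧ ∑ i, β i = 1) :
    let d : Fin n → Fin n → ℝ := fun i j =>
      sInf {c : ℝ | ∃ s : List (Fin m × Bool), IsWalk ends i j s ∧ c = (s.length : ℝ)}
    let B2 : ℝ := sInf {c : ℝ | ∃ J : Fin m → ℝ, B.mulVec J = α - β ∧
      c = Real.sqrt (∑ e, (J e) ^ 2)}
    let W1 : ℝ := sInf {c : ℝ | ∃ π : Matrix (Fin n) (Fin n) ℝ,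
      (∀ i j, 0 ≤ π i j) ∧ (∀ i, ∑ j, π i j = α i) ∧ (∀ j, ∑ i, π i j = β j) ∧
      c = ∑ i, ∑ j, π i j * d i j}
    B2 ≤ W1 ∧ W1 ≤ Real.sqrt m * B2 := by
  classical
  intro d B2 W1
  obtain ⟨hα0, hα1⟩ := hα
  obtain ⟨hβ0, hβ1⟩ := hβ
  have hd : ∀ i j, d i j
      = sInf {c : ℝ | ∃ s : List (Fin m × Bool), IsWalk ends i j s ∧ c = (s.length : ℝ)} :=
    fun i j => rfl
  set SB := {c : ℝ | ∃ J : Fin m → ℝ, B.mulVec J = α - β ∧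
    c = Real.sqrt (∑ e, (J e) ^ 2)} with hSBdef
  set SW := {c : ℝ | ∃ π : Matrix (Fin n) (Fin n) ℝ,
    (∀ i j, 0 ≤ π i j) ∧ (∀ i, ∑ j, π i j = α i) ∧ (∀ j, ∑ i, π i j = β j) ∧
    c = ∑ i, ∑ j, π i j * d i j} with hSWdef
  have hB2 : B2 = sInf SB := rfl
  have hW1 : W1 = sInf SW := rfl
  -- distance properties
  have hbdd : ∀ i j : Fin n,
      BddBelow {c : ℝ | ∃ s : List (Fin m × Bool), IsWalk ends i j s ∧ c = (s.length : ℝ)} := by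
    intro i j
    refine ⟨0, ?_⟩
    rintro c ⟨s, _, rfl⟩
    positivity
  have hdle : ∀ (i j : Fin n) (s : List (Fin m × Bool)), IsWalk ends i j s →
      d i j ≤ (s.length : ℝ) := by
    intro i j s hs
    rw [hd i j]
    exact csInf_le (hbdd i j) ⟨s, hs, rfl⟩
  have hdnn : ∀ i j : Fin n, 0 ≤ d i j := by
    intro i j
    rw [hd i j]
    obtain ⟨s, hs⟩ := hconn i j
    refine le_csInf ⟨(s.length : ℝ), ⟨s, hs, rfl⟩⟩ ?_
    rintro c ⟨s', _, rfl⟩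
    positivity
  have hd0 : ∀ i : Fin n, d i i = 0 := by
    intro i
    refine le_antisymm ?_ (hdnn i i)
    have := hdle i i [] ((isWalk_nil ends i i).mpr rfl)
    simpa using this
  have hdex : ∀ i j : Fin n, ∃ s : List (Fin m × Bool),
      IsWalk ends i j s ∧ ((s.length : ℝ)) = d i j := by
    intro i j
    have hP : ∃ k : ℕ, ∃ s : List (Fin m × Bool), IsWalk ends i j s ∧ s.length = k := by
      obtain ⟨s, hs⟩ := hconn i j
      exact ⟨s.length, s, hs, rfl⟩
    obtain ⟨s, hs, hlen⟩ := Nat.find_spec hP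
    refine ⟨s, hs, ?_⟩
    rw [hd i j]
    apply le_antisymm
    · refine le_csInf ⟨(s.length : ℝ), ⟨s, hs, rfl⟩⟩ ?_
      rintro c ⟨s', hs', rfl⟩
      have h1 : Nat.find hP ≤ s'.length := Nat.find_min' hP ⟨s', hs', rfl⟩
      rw [hlen]
      exact_mod_cast h1
    · exact csInf_le (hbdd i j) ⟨s, hs, rfl⟩
  choose sf hws hlen using hdex
  -- bounds for the two sets
  have hSBbdd : BddBelow SB := by
    refine ⟨0, ?_⟩
    rintro c ⟨J, _, rfl⟩
    positivity
  have hSWbdd : BddBelow SW := by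
    refine ⟨0, ?_⟩
    rintro c ⟨π, h1, _, _, rfl⟩
    exact Finset.sum_nonneg fun i _ => Finset.sum_nonneg fun j _ =>
      mul_nonneg (h1 i j) (hdnn i j)
  -- the product coupling shows SW is nonempty
  have hSWne : SW.Nonempty := by
    refine ⟨_, ⟨fun i j => α i * β j, ?_, ?_, ?_, rfl⟩⟩
    · intro i j; exact mul_nonneg (hα0 i) (hβ0 j)
    · intro i
      rw [← Finset.mul_sum, hβ1, mul_one]
    · intro j
      rw [← Finset.sum_mul, hα1, one_mul]
  -- every coupling gives a feasible flow, so SB is nonempty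
  have hSBne : SB.Nonempty := by
    obtain ⟨c, π, h1, h2, h3, _⟩ := hSWne
    obtain ⟨J, hmv, _⟩ := coupling_to_flow ends B hB d sf hws hlen α β π h1 h2 h3
    exact ⟨_, J, hmv, rfl⟩
  constructor
  · -- B2 ≤ W1
    rw [hB2, hW1]
    refine le_csInf hSWne ?_
    rintro c ⟨π, h1, h2, h3, rfl⟩
    obtain ⟨J, hmv, hle⟩ := coupling_to_flow ends B hB d sf hws hlen α β π h1 h2 h3
    exact (csInf_le hSBbdd ⟨J, hmv, rfl⟩).trans hle
  · -- W1 ≤ √m · B2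
    have key : ∀ c ∈ SB, W1 ≤ Real.sqrt m * c := by
      rintro c ⟨J, hmv, rfl⟩
      have hmv' : ∀ k, B.mulVec J k = α k - β k := by
        intro k; rw [hmv]; rfl
      obtain ⟨π, h1, h2, h3, h4⟩ := decomp ends hloop B hB d hd0 hdle
        ((Finset.univ.filter (fun e => J e ≠ 0)).card
          + (Finset.univ.filter (fun k => α k ≠ β k)).card) J α β hα0 hβ0 hmv' le_rfl
      have hW1le : W1 ≤ ∑ i, ∑ j, π i j * d i j :=
        csInf_le hSWbdd ⟨π, h1, h2, h3, rfl⟩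
      calc W1 ≤ ∑ i, ∑ j, π i j * d i j := hW1le
        _ ≤ ∑ e, |J e| := h4
        _ ≤ Real.sqrt m * Real.sqrt (∑ e, J e ^ 2) := l1_le_sqrt_card J
    rcases Nat.eq_zero_or_pos m with hm | hm
    · obtain ⟨c₀, hc₀⟩ := hSBne
      have h1 := key c₀ hc₀
      subst hm
      simp only [Nat.cast_zero, Real.sqrt_zero, zero_mul] at h1 ⊢
      exact h1
    · have hsqrt : 0 < Real.sqrt m := Real.sqrt_pos.mpr (by exact_mod_cast hm)
      have h1 : W1 / Real.sqrt m ≤ B2 := by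
        rw [hB2]
        refine le_csInf hSBne ?_
        intro c hc
        rw [div_le_iff₀ hsqrt, mul_comm]
        exact key c hc
      rw [div_le_iff₀ hsqrt] at h1
      calc W1 ≤ B2 * Real.sqrt m := h1
        _ = Real.sqrt m * B2 := mul_comm _ _
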